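/- Let R ⊆ (Fin r → Bool) be a Boolean relation that is not mergeable but is closed under pointwise disjunction (for all α, β ∈ R, α ∨ β ∈ R). Then there exists a map c : Fin r → (Fin 3 ⊕ Bool) such that the ternary relation R' := {t : Fin 3 → Bool | (fun i => Sum.elim t id (c i)) ∈ R} contains (false,false,false), (true,true,false), and (true,false,true), but does not contain (true,false,false). -/
import Mathlib


/-- The merge operation applies to tuples `α β γ δ` if `α ∧ δ ≤ β ≤ α` and
`β ∧ γ ≤ δ ≤ γ` (pointwise, on Boolean tuples). -/
def MergeApplies {r : ℕ} (α β γ δ : Fin r → Bool) : Prop :=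
  (∀ i, (α i && δ i) ≤ β i) ∧ (∀ i, β i ≤ α i) ∧
    (∀ i, (β i && γ i) ≤ δ i) ∧ (∀ i, δ i ≤ γ i)

/-- A Boolean relation is mergeable if it is closed under the merge operation. -/
def Mergeable {r : ℕ} (R : Set (Fin r → Bool)) : Prop :=
  ∀ α ∈ R, ∀ β ∈ R, ∀ γ ∈ R, ∀ δ ∈ R,
    MergeApplies α β γ δ → (fun i => α i && (β i || γ i)) ∈ R

theorem stmt_17 {r : ℕ} (R : Set (Fin r → Bool)) (hR : ¬ Mergeable R)
    (hor : ∀ α ∈ R, ∀ β ∈ R, (fun i => α i || β i) ∈ R) :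
    ∃ c : Fin r → (Fin 3 ⊕ Bool),
      ((fun i => Sum.elim ![false, false, false] id (c i)) ∈ R) ∧
      ((fun i => Sum.elim ![true, true, false] id (c i)) ∈ R) ∧
      ((fun i => Sum.elim ![true, false, true] id (c i)) ∈ R) ∧
      ((fun i => Sum.elim ![true, false, false] id (c i)) ∉ R) := by
  unfold Mergeable at hR
  push_neg at hR
  obtain ⟨α, hα, β, hβ, γ, hγ, δ, hδ, hM, hμ⟩ := hR
  have hβα : ∀ i, β i = true → α i = true := by
    intro i hb
    have := hM.2.1 i
    rw [hb] at this
    exact Bool.eq_true_of_true_le this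
  refine ⟨fun i =>
    if β i then Sum.inr true
    else if α i && γ i then Sum.inl 0
    else if α i then Sum.inl 1
    else if γ i then Sum.inl 2
    else Sum.inr false, ?_, ?_, ?_, ?_⟩
  · have e : (fun i => Sum.elim ![false, false, false] id
        (if β i then Sum.inr true
         else if α i && γ i then Sum.inl 0
         else if α i then Sum.inl 1
         else if γ i then Sum.inl 2
         else Sum.inr (false : Bool))) = β := by
      funext i
      cases hb : β i <;> cases ha : α i <;> cases hc : γ i <;> simp [hb, ha, hc]
    rw [e]; exact hβ
  · have e : (fun i => Sum.elim ![true, true, false] id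
        (if β i then Sum.inr true
         else if α i && γ i then Sum.inl 0
         else if α i then Sum.inl 1
         else if γ i then Sum.inl 2
         else Sum.inr (false : Bool))) = α := by
      funext i
      cases hb : β i <;> cases ha : α i <;> cases hc : γ i <;>
        simp [hb, ha, hc]
      · exact (Bool.false_ne_true (ha ▸ hβα i hb)).elim
      · exact (Bool.false_ne_true (ha ▸ hβα i hb)).elim
    rw [e]; exact hα
  · have e : (fun i => Sum.elim ![true, false, true] id
        (if β i then Sum.inr true
         else if α i && γ i then Sum.inl 0
         else if α i then Sum.inl 1
         else if γ i then Sum.inl 2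
         else Sum.inr (false : Bool))) = fun i => β i || γ i := by
      funext i
      cases hb : β i <;> cases ha : α i <;> cases hc : γ i <;> simp [hb, ha, hc]
    rw [e]; exact hor β hβ γ hγ
  · have e : (fun i => Sum.elim ![true, false, false] id
        (if β i then Sum.inr true
         else if α i && γ i then Sum.inl 0
         else if α i then Sum.inl 1
         else if γ i then Sum.inl 2
         else Sum.inr (false : Bool))) = fun i => α i && (β i || γ i) := by
      funext i
      cases hb : β i <;> cases ha : α i <;> cases hc : γ i <;> simp [hb, ha, hc]
      · exact (Bool.false_ne_true (ha ▸ hβα i hb)).elim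
      · exact (Bool.false_ne_true (ha ▸ hβα i hb)).elim
    rw [e]; exact hμ
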